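/- Let N ≥ 2 and d ≥ 1, and let Θ = [θ_1, …, θ_N] ∈ ℝ^{d×N} and G = [g_1, …, g_N] ∈ ℝ^{d×N}. Suppose the N×N matrix GᵀG ∘ L is invertible. Then the vector η* := −(GᵀG ∘ L)⁻¹ (GᵀΘ ∘ L) 𝟙 is a global minimizer of Ψ, i.e. Ψ(η*) ≤ Ψ(η) for every η ∈ ℝ^N. -/
import Mathlib


open Matrix

/-- The Laplacian of the complete graph on `N` vertices: `L = N·I − 𝟙𝟙ᵀ`. -/
noncomputable def ggL (N : ℕ) : Matrix (Fin N) (Fin N) ℝ :=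
  (N : ℝ) • (1 : Matrix (Fin N) (Fin N) ℝ) - Matrix.of fun _ _ => (1 : ℝ)

/-- `Ψ(η) = Σᵢ ‖θ̃ᵢ − (1/N) Σⱼ θ̃ⱼ‖²` where `θ̃ᵢ = θᵢ + ηᵢ gᵢ`, and the columns of
`Θ` (resp. `G`) are the `θᵢ` (resp. `gᵢ`).  Here `‖·‖` is the Euclidean norm on `ℝ^d`. -/
noncomputable def Psi {d N : ℕ} (Θ G : Matrix (Fin d) (Fin N) ℝ) (η : Fin N → ℝ) : ℝ :=
  ∑ i : Fin N, ∑ k : Fin d,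
    ((Θ k i + η i * G k i) - (1 / (N : ℝ)) * ∑ j : Fin N, (Θ k j + η j * G k j)) ^ 2

lemma gg_sum_sq_sub_mean {N : ℕ} (hN : (N : ℝ) ≠ 0) (y : Fin N → ℝ) :
    ∑ i : Fin N, (y i - (1 / (N : ℝ)) * ∑ j : Fin N, y j) ^ 2
      = (1 / (N : ℝ)) * ((N : ℝ) * ∑ i : Fin N, (y i) ^ 2 - (∑ i : Fin N, y i) ^ 2) := by
  have h : ∀ i ∈ Finset.univ, (y i - (1 / (N : ℝ)) * ∑ j : Fin N, y j) ^ 2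
      = (y i) ^ 2 - (2 * (1 / (N : ℝ)) * ∑ j : Fin N, y j) * y i
        + ((1 / (N : ℝ)) * ∑ j : Fin N, y j) ^ 2 := by
    intro i _; ring
  rw [Finset.sum_congr rfl h, Finset.sum_add_distrib, Finset.sum_sub_distrib,
    ← Finset.mul_sum, Finset.sum_const, Finset.card_univ, Fintype.card_fin, nsmul_eq_mul]
  field_simp
  ring

lemma gg_Psi_eq {d N : ℕ} (hN : (N : ℝ) ≠ 0) (Θ G : Matrix (Fin d) (Fin N) ℝ)
    (η : Fin N → ℝ) :
    Psi Θ G η = (1 / (N : ℝ)) * ∑ k : Fin d,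
      ((N : ℝ) * ∑ i : Fin N, (Θ k i + η i * G k i) ^ 2
        - (∑ i : Fin N, (Θ k i + η i * G k i)) ^ 2) := by
  unfold Psi
  rw [Finset.sum_comm, Finset.mul_sum]
  exact Finset.sum_congr rfl fun k _ => gg_sum_sq_sub_mean hN _

lemma gg_quad_expand {N : ℕ} (u v : Fin N → ℝ) :
    (N : ℝ) * ∑ i : Fin N, (u i + v i) ^ 2 - (∑ i : Fin N, (u i + v i)) ^ 2
      = ((N : ℝ) * ∑ i : Fin N, (u i) ^ 2 - (∑ i : Fin N, u i) ^ 2)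
        + 2 * ((N : ℝ) * ∑ i : Fin N, u i * v i
          - (∑ i : Fin N, u i) * (∑ i : Fin N, v i))
        + ((N : ℝ) * ∑ i : Fin N, (v i) ^ 2 - (∑ i : Fin N, v i) ^ 2) := by
  have h1 : ∑ i : Fin N, (u i + v i) ^ 2
      = ∑ i : Fin N, (u i) ^ 2 + 2 * ∑ i : Fin N, u i * v i + ∑ i : Fin N, (v i) ^ 2 := by
    rw [Finset.mul_sum, ← Finset.sum_add_distrib, ← Finset.sum_add_distrib]
    exact Finset.sum_congr rfl fun i _ => by ring
  rw [h1, Finset.sum_add_distrib]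
  ring

/-- If `GᵀG ∘ L` is invertible, then `η* = −(GᵀG ∘ L)⁻¹ (GᵀΘ ∘ L) 𝟙` is a global
minimizer of `Ψ`. -/
theorem gg_eta_star_is_global_minimizer {d N : ℕ} (hN : 2 ≤ N) (hd : 1 ≤ d)
    (Θ G : Matrix (Fin d) (Fin N) ℝ)
    (hinv : IsUnit ((Gᵀ * G) ⊙ ggL N)) :
    ∀ η : Fin N → ℝ,
      Psi Θ G ((-(((Gᵀ * G) ⊙ ggL N)⁻¹ * ((Gᵀ * Θ) ⊙ ggL N))) *ᵥ fun _ => (1 : ℝ)) ≤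
        Psi Θ G η := by
  intro η
  have hN0 : (N : ℝ) ≠ 0 := by
    have : (0 : ℝ) < N := by exact_mod_cast Nat.lt_of_lt_of_le two_pos hN
    exact ne_of_gt this
  set ηs : Fin N → ℝ :=
    (-(((Gᵀ * G) ⊙ ggL N)⁻¹ * ((Gᵀ * Θ) ⊙ ggL N))) *ᵥ fun _ => (1 : ℝ) with hηs
  set x : Fin d → Fin N → ℝ := fun k j => Θ k j + ηs j * G k j with hx
  set δ : Fin N → ℝ := fun i => η i - ηs i with hδ
  -- key matrix identity
  have hdet : IsUnit ((Gᵀ * G) ⊙ ggL N).det :=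
    (Matrix.isUnit_iff_isUnit_det _).mp hinv
  have hAinv : ((Gᵀ * G) ⊙ ggL N) * ((Gᵀ * G) ⊙ ggL N)⁻¹ = 1 :=
    Matrix.mul_nonsing_inv _ hdet
  have hkey : ∀ i, (∑ j : Fin N, ((Gᵀ * G) ⊙ ggL N) i j * ηs j)
      + ∑ j : Fin N, ((Gᵀ * Θ) ⊙ ggL N) i j = 0 := by
    intro i
    have hv : ((Gᵀ * G) ⊙ ggL N) *ᵥ ηs
        = -(((Gᵀ * Θ) ⊙ ggL N) *ᵥ fun _ => (1 : ℝ)) := by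
      rw [hηs, Matrix.mulVec_mulVec, Matrix.mul_neg, ← Matrix.mul_assoc, hAinv, one_mul,
        Matrix.neg_mulVec]
    have := congrFun hv i
    simp only [Matrix.mulVec, dotProduct, Pi.neg_apply, mul_one] at this
    rw [this]
    ring
  -- orthogonality condition in sum form
  have h0 : ∀ i, ∑ k : Fin d, G k i * ((N : ℝ) * x k i - ∑ j : Fin N, x k j) = 0 := by
    intro i
    have h2 : ∑ k : Fin d, G k i * ((N : ℝ) * x k i - ∑ j : Fin N, x k j)
        = (∑ j : Fin N, ((Gᵀ * G) ⊙ ggL N) i j * ηs j)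
          + ∑ j : Fin N, ((Gᵀ * Θ) ⊙ ggL N) i j := by
      simp only [Matrix.hadamard_apply, Matrix.mul_apply, Matrix.transpose_apply, ggL,
        Matrix.sub_apply, Matrix.smul_apply, Matrix.one_apply, Matrix.of_apply,
        smul_eq_mul, mul_ite, mul_one, mul_zero]
      rw [← Finset.sum_add_distrib]
      have h3 : ∀ j ∈ Finset.univ,
          (∑ k : Fin d, G k i * G k j) * ((if i = j then (N : ℝ) else 0) - 1) * ηs j
            + (∑ k : Fin d, G k i * Θ k j) * ((if i = j then (N : ℝ) else 0) - 1)
          = ((if i = j then (N : ℝ) else 0) - 1) * ∑ k : Fin d, G k i * x k j := by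
        intro j _
        simp only [Finset.sum_mul, Finset.mul_sum]
        rw [← Finset.sum_add_distrib]
        exact Finset.sum_congr rfl fun k _ => by simp only [hx]; ring
      rw [Finset.sum_congr rfl h3]
      have h4 : ∀ j ∈ Finset.univ,
          ((if i = j then (N : ℝ) else 0) - 1) * ∑ k : Fin d, G k i * x k j
          = (if i = j then (N : ℝ) * ∑ k : Fin d, G k i * x k j else 0)
            - ∑ k : Fin d, G k i * x k j := by
        intro j _
        split <;> ring
      rw [Finset.sum_congr rfl h4, Finset.sum_sub_distrib, Finset.sum_ite_eq,
        if_pos (Finset.mem_univ i)]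
      have h7 : ∀ k ∈ Finset.univ,
          G k i * ((N : ℝ) * x k i - ∑ j : Fin N, x k j)
          = (N : ℝ) * (G k i * x k i) - ∑ j : Fin N, G k i * x k j := by
        intro k _
        rw [mul_sub, Finset.mul_sum]
        congr 1
        ring
      rw [Finset.sum_congr rfl h7, Finset.sum_sub_distrib, ← Finset.mul_sum]
      congr 1
      exact Finset.sum_comm
    rw [h2, hkey i]
  -- rewrite Psi on both sides
  rw [gg_Psi_eq hN0, gg_Psi_eq hN0]
  have hsplit : ∀ k : Fin d,
      (N : ℝ) * ∑ i : Fin N, (Θ k i + η i * G k i) ^ 2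
        - (∑ i : Fin N, (Θ k i + η i * G k i)) ^ 2
      = ((N : ℝ) * ∑ i : Fin N, (x k i) ^ 2 - (∑ i : Fin N, x k i) ^ 2)
        + 2 * ((N : ℝ) * ∑ i : Fin N, x k i * (δ i * G k i)
          - (∑ i : Fin N, x k i) * (∑ i : Fin N, δ i * G k i))
        + ((N : ℝ) * ∑ i : Fin N, (δ i * G k i) ^ 2
          - (∑ i : Fin N, δ i * G k i) ^ 2) := by
    intro k
    have he : ∀ i ∈ Finset.univ, Θ k i + η i * G k i = x k i + δ i * G k i := by
      intro i _; simp only [hx, hδ]; ring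
    have he2 : ∀ i ∈ Finset.univ,
        (Θ k i + η i * G k i) ^ 2 = (x k i + δ i * G k i) ^ 2 := by
      intro i hi; rw [he i hi]
    rw [Finset.sum_congr rfl he, Finset.sum_congr rfl he2]
    exact gg_quad_expand (x k) (fun i => δ i * G k i)
  have hcross : ∑ k : Fin d, ((N : ℝ) * ∑ i : Fin N, x k i * (δ i * G k i)
      - (∑ i : Fin N, x k i) * (∑ i : Fin N, δ i * G k i))
      = ∑ i : Fin N, δ i * ∑ k : Fin d, G k i * ((N : ℝ) * x k i - ∑ j : Fin N, x k j) := by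
    have hper : ∀ k ∈ Finset.univ,
        (N : ℝ) * ∑ i : Fin N, x k i * (δ i * G k i)
          - (∑ i : Fin N, x k i) * (∑ i : Fin N, δ i * G k i)
        = ∑ i : Fin N, δ i * (G k i * ((N : ℝ) * x k i - ∑ j : Fin N, x k j)) := by
      intro k _
      have h5 : ∀ i ∈ Finset.univ,
          δ i * (G k i * ((N : ℝ) * x k i - ∑ j : Fin N, x k j))
          = (N : ℝ) * (x k i * (δ i * G k i))
            - (∑ j : Fin N, x k j) * (δ i * G k i) := by
        intro i _; ring
      rw [Finset.sum_congr rfl h5, Finset.sum_sub_distrib, ← Finset.mul_sum,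
        ← Finset.mul_sum]
    rw [Finset.sum_congr rfl hper, Finset.sum_comm]
    exact Finset.sum_congr rfl fun i _ => (Finset.mul_sum _ _ _).symm
  -- nonnegativity of the quadratic remainder
  have hRnn : 0 ≤ ∑ k : Fin d,
      ((N : ℝ) * ∑ i : Fin N, (δ i * G k i) ^ 2 - (∑ i : Fin N, δ i * G k i) ^ 2) := by
    refine Finset.sum_nonneg fun k _ => ?_
    have h6 := sq_sum_le_card_mul_sum_sq (s := (Finset.univ : Finset (Fin N)))
      (f := fun i => δ i * G k i)
    simp only [Finset.card_univ, Fintype.card_fin] at h6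
    linarith
  have hzero : ∑ i : Fin N,
      δ i * ∑ k : Fin d, G k i * ((N : ℝ) * x k i - ∑ j : Fin N, x k j) = 0 :=
    Finset.sum_eq_zero fun i _ => by rw [h0 i, mul_zero]
  have hBA : ∑ k : Fin d, ((N : ℝ) * ∑ i : Fin N, (Θ k i + η i * G k i) ^ 2
        - (∑ i : Fin N, (Θ k i + η i * G k i)) ^ 2)
      = (∑ k : Fin d, ((N : ℝ) * ∑ i : Fin N, (x k i) ^ 2 - (∑ i : Fin N, x k i) ^ 2))
        + 2 * ∑ i : Fin N,
            δ i * ∑ k : Fin d, G k i * ((N : ℝ) * x k i - ∑ j : Fin N, x k j)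
        + ∑ k : Fin d, ((N : ℝ) * ∑ i : Fin N, (δ i * G k i) ^ 2
            - (∑ i : Fin N, δ i * G k i) ^ 2) := by
    rw [Finset.sum_congr rfl fun k _ => hsplit k, Finset.sum_add_distrib,
      Finset.sum_add_distrib, ← Finset.mul_sum, hcross]
  have hxs : ∀ k i, Θ k i + ηs i * G k i = x k i := fun k i => rfl
  apply mul_le_mul_of_nonneg_left _ (by positivity : (0 : ℝ) ≤ 1 / (N : ℝ))
  simp only [hxs]
  rw [hBA, hzero, mul_zero, add_zero]
  linarith
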